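/- The single-pass edge-stream algorithm that initializes τ[v] := init[v] for every vertex v, and then, scanning temporal edges (u,v,t,λ) in nondecreasing order of starting time t, updates τ[v] := min(τ[v], t+λ) whenever τ[u] ≤ t and t+λ ≤ t_ω, computes for each vertex v the multiple-source earliest-arrival path time to v within the time window [t_α, t_ω]; moreover if the algorithm returns ∞ for v then v is unreachable within [t_α, t_ω] from every vertex u starting no earlier than init[u]. -/

import Mathlib

open scoped Classical

structure TEdge (V : Type) where
  src : V
  dst : V
  t : ℝ
  len : ℝ

variable {V : Type}

/-- Consecutive compatibility of temporal edges. -/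
def compat (e f : TEdge V) : Prop := e.dst = f.src ∧ e.t + e.len ≤ f.t

/-- A temporal path from `x` to `y`: a nonempty list of temporal edges of `E`,
starting at `x`, ending at `y`, consecutively compatible. -/
def IsPath (E : Set (TEdge V)) (x y : V) (p : List (TEdge V)) : Prop :=
  p ≠ [] ∧ (∀ e ∈ p, e ∈ E) ∧ p.head?.map TEdge.src = some x ∧
    p.getLast?.map TEdge.dst = some y ∧ List.Chain' compat p

/-- Starting time of a temporal path. -/
def startT (p : List (TEdge V)) : ℝ := ((p.head?).map TEdge.t).getD 0

/-- Ending (arrival) time of a temporal path. -/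
def endT (p : List (TEdge V)) : ℝ := ((p.getLast?).map (fun e => e.t + e.len)).getD 0

/-- Distance (sum of traversal times) of a temporal path. -/
def distT (p : List (TEdge V)) : ℝ := (p.map TEdge.len).sum

/-- One step of the edge-stream earliest-arrival algorithm: scanning edge `e`,
update `τ e.dst` to `min (τ e.dst) (e.t + e.len)` whenever `τ e.src ≤ e.t`
and `e.t + e.len ≤ tω`. -/
noncomputable def stepEA (tω : ℝ) (τ : V → EReal) (e : TEdge V) : V → EReal :=
  fun v =>
    if v = e.dst ∧ τ e.src ≤ (e.t : EReal) ∧ e.t + e.len ≤ tω then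
      min (τ v) ((e.t + e.len : ℝ) : EReal)
    else τ v

/-- All edges of `p` lie within the window `[tα, tω]`. -/
def InWindowE (tα tω : ℝ) (p : List (TEdge V)) : Prop :=
  ∀ e ∈ p, tα ≤ e.t ∧ e.t + e.len ≤ tω

/-- The multiple-source earliest-arrival time to `y` within `[tα, tω]`:
the minimum over `init y` (waiting at `y`) and the arrival times of temporal
paths to `y` lying in the window and starting at some `x` no earlier than `init x`. -/
noncomputable def mseapTime (E : Set (TEdge V)) (init : V → EReal) (tα tω : ℝ) (y : V) : EReal :=
  sInf {a : EReal | a = init y ∨ ∃ p x, IsPath E x y p ∧ InWindowE tα tω p ∧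
    init x ≤ (startT p : EReal) ∧ a = ((endT p : ℝ) : EReal)}

lemma stepEA_le (tω : ℝ) (τ : V → EReal) (e : TEdge V) (v : V) :
    stepEA tω τ e v ≤ τ v := by
  unfold stepEA
  split
  · exact min_le_left _ _
  · exact le_refl _

lemma foldl_stepEA_le (tω : ℝ) : ∀ (l : List (TEdge V)) (τ : V → EReal) (v : V),
    (l.foldl (stepEA tω) τ) v ≤ τ v := by
  intro l
  induction l with
  | nil => intro τ v; exact le_refl _
  | cons e l ih =>
    intro τ v
    exact le_trans (ih _ v) (stepEA_le tω τ e v)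

/-- Soundness: every value computed by the fold is either `init v` or the arrival
time of a genuine temporal path in the window. -/
lemma foldl_stepEA_mem (l : List (TEdge V)) (tα tω : ℝ) (hpos : ∀ e ∈ l, 0 < e.len)
    (init : V → EReal)
    (hinit : ∀ v, init v = ⊤ ∨ ((tα : EReal) ≤ init v ∧ init v ≤ (tω : EReal))) :
    ∀ (l' : List (TEdge V)) (τ : V → EReal), (∀ e ∈ l', e ∈ l) →
    (∀ v, τ v = init v ∨ ∃ p x, IsPath {e | e ∈ l} x v p ∧ InWindowE tα tω p ∧
      init x ≤ (startT p : EReal) ∧ τ v = ((endT p : ℝ) : EReal)) →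
    (∀ v, (l'.foldl (stepEA tω) τ) v = init v ∨ ∃ p x, IsPath {e | e ∈ l} x v p ∧
      InWindowE tα tω p ∧ init x ≤ (startT p : EReal) ∧
      (l'.foldl (stepEA tω) τ) v = ((endT p : ℝ) : EReal)) := by
  intro l'
  induction l' with
  | nil => intro τ _ hτ v; exact hτ v
  | cons e l' ih =>
    intro τ hsub hτ v
    have he : e ∈ l := hsub e (List.mem_cons_self)
    refine ih (stepEA tω τ e) (fun f hf => hsub f (List.mem_cons_of_mem _ hf)) ?_ v
    intro w
    by_cases hc : w = e.dst ∧ τ e.src ≤ (e.t : EReal) ∧ e.t + e.len ≤ tω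
    · have hval : stepEA tω τ e w = min (τ w) ((e.t + e.len : ℝ) : EReal) := by
        unfold stepEA; rw [if_pos hc]
      rcases le_total (τ w) ((e.t + e.len : ℝ) : EReal) with h | h
      · rw [hval, min_eq_left h]; exact hτ w
      · rw [hval, min_eq_right h]
        obtain ⟨hw, hsrc, htω⟩ := hc
        subst hw
        rcases hτ e.src with h0 | ⟨p, x, hp, hwin, hst, hend⟩
        · -- path [e]
          rw [h0] at hsrc
          have htα : tα ≤ e.t := by
            rcases hinit e.src with h1 | ⟨h1, _⟩
            · rw [h1] at hsrc; exact absurd hsrc (by simp)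
            · exact EReal.coe_le_coe_iff.mp (le_trans h1 hsrc)
          refine Or.inr ⟨[e], e.src, ⟨by simp, by simpa using he, by simp, by simp,
            List.isChain_singleton e⟩, ?_, ?_, ?_⟩
          · intro f hf
            simp only [List.mem_singleton] at hf
            subst hf; exact ⟨htα, htω⟩
          · simpa [startT] using hsrc
          · simp [endT]
        · -- extend path p with e
          rw [hend] at hsrc
          have hle : endT p ≤ e.t := EReal.coe_le_coe_iff.mp hsrc
          obtain ⟨hne, hE, hhead, hlast, hchain⟩ := hp
          rcases List.eq_nil_or_concat p with h1 | ⟨q, f, h1⟩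
          · exact absurd h1 hne
          have h1' : p = q ++ [f] := by simpa using h1
          have hgl : p.getLast? = some f := by rw [h1']; exact List.getLast?_concat
          have hfdst : f.dst = e.src := by
            rw [hgl] at hlast; simpa using hlast
          have hfp : f ∈ p := List.mem_of_mem_getLast? (by simp [hgl])
          have hfl : f ∈ l := hE f hfp
          have hendp : endT p = f.t + f.len := by
            simp [endT, hgl]
          have hcompat : compat f e := ⟨hfdst, by rw [← hendp]; exact hle⟩
          obtain ⟨a, p'', ha⟩ := List.exists_cons_of_ne_nil hne
          refine Or.inr ⟨p ++ [e], x, ⟨by simp, ?_, ?_, ?_, ?_⟩, ?_, ?_, ?_⟩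
          · intro g hg
            rcases List.mem_append.mp hg with hg | hg
            · exact hE g hg
            · simp only [List.mem_singleton] at hg; subst hg; exact he
          · rw [ha] at hhead ⊢; simpa using hhead
          · rw [List.getLast?_concat]; simp
          · exact List.IsChain.append hchain (List.isChain_singleton e)
              (fun y hy z hz => by
                rw [hgl] at hy; simp at hy hz; subst hy; subst hz; exact hcompat)
          · intro g hg
            rcases List.mem_append.mp hg with hg | hg
            · exact hwin g hg
            · simp only [List.mem_singleton] at hg; subst hg
              refine ⟨?_, htω⟩
              have : tα ≤ f.t := (hwin f hfp).1
              have hfpos : 0 < f.len := hpos f hfl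
              linarith [hle, hendp.symm.le]
          · have : startT (p ++ [e]) = startT p := by
              rw [ha]; simp [startT]
            rw [this]; exact hst
          · simp [endT, List.getLast?_concat]
    · have hval : stepEA tω τ e w = τ w := by unfold stepEA; rw [if_neg hc]
      rw [hval]; exact hτ w

/-- Completeness: after processing a prefix `l₁` containing the last edge of a
valid temporal path `p` to `v`, the computed label at `v` is at most `endT p`. -/
lemma foldl_stepEA_le_endT (l : List (TEdge V)) (tα tω : ℝ)
    (hsort : l.Pairwise (fun e f => e.t ≤ f.t))
    (hpos : ∀ e ∈ l, 0 < e.len) (init : V → EReal) :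
    ∀ (p : List (TEdge V)) (x v : V), IsPath {e | e ∈ l} x v p →
      InWindowE tα tω p → init x ≤ (startT p : EReal) →
      ∀ l₁ l₂, l = l₁ ++ l₂ → (∀ f, p.getLast? = some f → f ∈ l₁) →
      (l₁.foldl (stepEA tω) init) v ≤ ((endT p : ℝ) : EReal) := by
  intro p
  induction p using List.reverseRecOn with
  | nil => intro x v hp; exact absurd rfl hp.1
  | append_singleton p' e ih =>
    intro x v hp hw hstart l₁ l₂ hl hlast
    obtain ⟨hne, hE, hhead, hlastv, hchain⟩ := hp
    have he1 : e ∈ l₁ := hlast e List.getLast?_concat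
    obtain ⟨l₃, l₄, h13⟩ := List.append_of_mem he1
    have hv : v = e.dst := by
      rw [List.getLast?_concat] at hlastv; simpa using hlastv.symm
    have hl' : l = l₃ ++ e :: (l₄ ++ l₂) := by
      rw [hl, h13]; simp
    -- sortedness: anything in l after position of e has time ≥ e.t
    have hsorted_tail : ∀ g ∈ l₄ ++ l₂, e.t ≤ g.t := by
      have hsub : (e :: (l₄ ++ l₂)).Sublist l := by
        rw [hl']; exact List.sublist_append_right l₃ _
      have := (hsort.sublist hsub)
      exact (List.pairwise_cons.mp this).1
    have hchain' := List.isChain_append.mp (by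
      have : p' ++ [e] = p' ++ [e] := rfl
      exact hchain)
    have hewin : tα ≤ e.t ∧ e.t + e.len ≤ tω := hw e (by simp)
    -- key step: label of e.src after l₃ is at most e.t
    have h1 : (l₃.foldl (stepEA tω) init) e.src ≤ (e.t : EReal) := by
      rcases List.eq_nil_or_concat p' with hp0 | ⟨q, f, hqf⟩
      · -- single edge: x = e.src
        subst hp0
        have hx : x = e.src := by simpa using hhead.symm
        have hst : startT [e] = e.t := by simp [startT]
        calc (l₃.foldl (stepEA tω) init) e.src ≤ init e.src := foldl_stepEA_le tω l₃ init e.src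
          _ = init x := by rw [hx]
          _ ≤ (startT ([] ++ [e]) : EReal) := hstart
          _ = (e.t : EReal) := by norm_num [startT]
      · have hqf' : p' = q ++ [f] := by simpa using hqf
        have hp'ne : p' ≠ [] := by rw [hqf']; simp
        have hgl : p'.getLast? = some f := by rw [hqf']; exact List.getLast?_concat
        have hcf : compat f e := by
          refine hchain'.2.2 f ?_ e ?_ <;> simp [hgl]
        have hfp : f ∈ p' := List.mem_of_mem_getLast? (by simp [hgl])
        have hfl : f ∈ l := hE f (by simp [hfp])
        have hflt : f.t < e.t := by
          have := hpos f hfl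
          have := hcf.2
          linarith
        have hf3 : f ∈ l₃ := by
          have : f ∈ l₃ ++ e :: (l₄ ++ l₂) := by rw [← hl']; exact hfl
          rcases List.mem_append.mp this with h | h
          · exact h
          · rcases List.mem_cons.mp h with h | h
            · subst h; exact absurd hflt (lt_irrefl _)
            · exact absurd hflt (not_lt.mpr (hsorted_tail f h))
        obtain ⟨a, p'', ha⟩ := List.exists_cons_of_ne_nil hp'ne
        have hp'path : IsPath {e | e ∈ l} x e.src p' := by
          refine ⟨hp'ne, fun g hg => hE g (by simp [hg]), ?_, ?_, hchain'.1⟩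
          · rw [ha] at hhead ⊢; simpa using hhead
          · rw [hgl]; simpa using hcf.1
        have hstart' : init x ≤ (startT p' : EReal) := by
          have : startT (p' ++ [e]) = startT p' := by rw [ha]; simp [startT]
          rw [this] at hstart; exact hstart
        have hIH := ih x e.src hp'path (fun g hg => hw g (by simp [hg])) hstart'
          l₃ (e :: (l₄ ++ l₂)) hl' (fun g hg => by
            rw [hgl] at hg
            have : g = f := by simpa using hg.symm
            subst this; exact hf3)
        have hendp' : endT p' = f.t + f.len := by simp [endT, hgl]
        calc (l₃.foldl (stepEA tω) init) e.src ≤ ((endT p' : ℝ) : EReal) := hIH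
          _ ≤ (e.t : EReal) := by
              rw [hendp']; exact_mod_cast hcf.2
    -- now take the step on e
    have hstep : stepEA tω (l₃.foldl (stepEA tω) init) e e.dst ≤ ((e.t + e.len : ℝ) : EReal) := by
      unfold stepEA
      rw [if_pos ⟨rfl, h1, hewin.2⟩]
      exact min_le_right _ _
    have hfold : (l₁.foldl (stepEA tω) init) e.dst ≤ ((e.t + e.len : ℝ) : EReal) := by
      have : l₁.foldl (stepEA tω) init
          = l₄.foldl (stepEA tω) (stepEA tω (l₃.foldl (stepEA tω) init) e) := by
        rw [h13, List.foldl_append]; rfl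
      rw [this]
      exact le_trans (foldl_stepEA_le tω l₄ _ e.dst) hstep
    have hend : endT (p' ++ [e]) = e.t + e.len := by simp [endT, List.getLast?_concat]
    rw [hv, hend]
    exact hfold

theorem stmt2 (l : List (TEdge V)) (tα tω : ℝ)
    (hsort : l.Pairwise (fun e f => e.t ≤ f.t))
    (hpos : ∀ e ∈ l, 0 < e.len)
    (init : V → EReal)
    (hinit : ∀ v, init v = ⊤ ∨ ((tα : EReal) ≤ init v ∧ init v ≤ (tω : EReal))) :
    (∀ v, (l.foldl (stepEA tω) init) v = mseapTime {e | e ∈ l} init tα tω v) ∧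
    (∀ v, (l.foldl (stepEA tω) init) v = ⊤ →
      ∀ p x, IsPath {e | e ∈ l} x v p → InWindowE tα tω p →
        ¬ init x ≤ (startT p : EReal)) := by
  have hle : ∀ (p : List (TEdge V)) (x v : V), IsPath {e | e ∈ l} x v p →
      InWindowE tα tω p → init x ≤ (startT p : EReal) →
      (l.foldl (stepEA tω) init) v ≤ ((endT p : ℝ) : EReal) := by
    intro p x v hp hw hs
    refine foldl_stepEA_le_endT l tα tω hsort hpos init p x v hp hw hs l [] (by simp) ?_
    intro f hf
    exact hp.2.1 f (List.mem_of_mem_getLast? (by simp [hf]))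
  constructor
  · intro v
    apply le_antisymm
    · apply le_sInf
      intro a ha
      rcases ha with ha | ⟨p, x, hp, hw, hs, ha⟩
      · rw [ha]; exact foldl_stepEA_le tω l init v
      · rw [ha]; exact hle p x v hp hw hs
    · apply sInf_le
      exact foldl_stepEA_mem l tα tω hpos init hinit l init (fun e he => he)
        (fun v => Or.inl rfl) v
  · intro v hv p x hp hw hs
    have := hle p x v hp hw hs
    rw [hv] at this
    exact absurd this (by simp)
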